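/- With P = [[0,0],[0,1]], Φ(t,s) the evolution matrix of z' = -Aᵀ z for A = [[1,0],[1,0]], and H = [[1,0],[0,0]], the matrix W = ∫₀^{2π} P·Φ(2π,s)·Hᵀ·H·Φ(2π,s)ᵀ·P ds is the zero matrix. -/

import Mathlib

open Real Matrix

noncomputable def G0 : ℝ → Matrix (Fin 2) (Fin 2) ℝ :=
  fun t => !![Real.exp (-t), Real.exp (-t) - 1; 0, 1]

/-- Evolution matrix Φ(2π, s) = G(2π) G(s)⁻¹ of z' = -Aᵀ z. -/
noncomputable def Phi0 (s : ℝ) : Matrix (Fin 2) (Fin 2) ℝ := G0 (2 * π) * (G0 s)⁻¹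

noncomputable def P0 : Matrix (Fin 2) (Fin 2) ℝ := !![0,0;0,1]

noncomputable def H0 : Matrix (Fin 2) (Fin 2) ℝ := !![1,0;0,0]

lemma G0_inv (s : ℝ) : (G0 s)⁻¹ = !![Real.exp s, Real.exp s - 1; 0, 1] := by
  apply Matrix.inv_eq_right_inv
  ext i j
  fin_cases i <;> fin_cases j <;>
    simp [G0, Matrix.mul_apply, Fin.sum_univ_two, ← Real.exp_add] <;> ring_nf <;>
      simp [← Real.exp_add]

lemma Phi0_eq (s : ℝ) :
    Phi0 s = !![Real.exp (s - 2 * π), Real.exp (s - 2 * π) - 1; 0, 1] := by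
  rw [Phi0, G0_inv]
  ext i j
  fin_cases i <;> fin_cases j <;>
    simp [G0, Matrix.mul_apply, Fin.sum_univ_two, ← Real.exp_add] <;> ring_nf <;>
      simp [← Real.exp_add]

lemma integrand_zero (s : ℝ) (i j : Fin 2) :
    (P0 * Phi0 s * H0ᵀ * H0 * (Phi0 s)ᵀ * P0) i j = 0 := by
  rw [Phi0_eq]
  fin_cases i <;> fin_cases j <;>
    simp [P0, H0, Matrix.mul_apply, Matrix.transpose_apply, Fin.sum_univ_two,
      Matrix.cons_val_zero, Matrix.cons_val_one, Matrix.head_cons, Matrix.vecHead, Matrix.vecTail] <;>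
      simp [Matrix.vecMul, dotProduct, Matrix.mul_apply, Matrix.transpose_apply, Fin.sum_univ_two]

/-- W = ∫₀^{2π} P Φ(2π,s) Hᵀ H Φ(2π,s)ᵀ P ds is the zero matrix. -/
theorem stmt5 (W : Matrix (Fin 2) (Fin 2) ℝ)
    (hW : ∀ i j : Fin 2,
      W i j = ∫ s in (0:ℝ)..(2 * π), (P0 * Phi0 s * H0ᵀ * H0 * (Phi0 s)ᵀ * P0) i j) :
    W = 0 := by
  ext i j
  rw [hW i j]
  simp [integrand_zero]
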